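/- The composition q ∘ α : V → X is continuous, injective, its range is exactly X ∖ q(E), and it is a local homeomorphism. -/

import Mathlib

noncomputable section

/-- The 2-sphere, realized as the unit sphere `{(c,z) : |c|² + z² = 1}` in `ℂ × ℝ`,
with the subspace topology. -/
def TwoSphere : Set (ℂ × ℝ) := {p | ‖p.1‖ ^ 2 + p.2 ^ 2 = 1}

/-- The relation `r₀` on `S²`: `r₀ (c,z) (c',z')` iff `z ≠ 0`, `c' = -c` and `z' = z`. -/
def sphRel (a b : TwoSphere) : Prop :=
  a.1.2 ≠ 0 ∧ b.1.1 = -a.1.1 ∧ b.1.2 = a.1.2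

/-- The twisted sphere `X`: the quotient of `S²` by the equivalence relation generated
by `r₀`, with the quotient topology. -/
abbrev TwistedSphere : Type := Quot (Relation.EqvGen sphRel)

/-- The quotient map `q : S² → X`. -/
abbrev sphQ : TwoSphere → TwistedSphere := Quot.mk (Relation.EqvGen sphRel)

/-- `V = S² ∖ E`: the points of the sphere whose `ℝ`-coordinate is nonzero
(the sphere minus the equator). -/
def sphV : Set TwoSphere := {p | p.1.2 ≠ 0}

/-- The (discontinuous) "angle halving" map `α : V → S²`,
`α(c,z) = (√|c| · c^{1/2}, z)` where `c^{1/2}` is the principal complex square root.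
It fixes the two poles, where `c = 0`. -/
def sphAlpha (v : sphV) : TwoSphere :=
  ⟨((Real.sqrt ‖v.1.1.1‖ : ℂ) * v.1.1.1 ^ (1/2 : ℂ), v.1.1.2), by
    obtain ⟨⟨⟨c, z⟩, hmem⟩, -⟩ := v
    simp only [TwoSphere, Set.mem_setOf_eq] at hmem ⊢
    have h1 : ‖(Real.sqrt ‖c‖ : ℂ) * c ^ (1/2 : ℂ)‖
        = ‖c‖ := by
      rw [norm_mul, Complex.norm_of_nonneg (Real.sqrt_nonneg _)]
      have h2 : (1/2 : ℂ) = ((1/2 : ℝ) : ℂ) := by norm_num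
      rw [h2, Complex.norm_cpow_real, ← Real.sqrt_eq_rpow,
        Real.mul_self_sqrt (norm_nonneg _)]
    rw [h1, hmem]⟩

/-- The equator `E = {(c,z) ∈ S² : z = 0}`, as a subset of `S²`. -/
def sphE : Set TwoSphere := {p | p.1.2 = 0}




namespace SphAux

/-- the angle-halving function on ℂ -/
def g1 (c : ℂ) : ℂ := (Real.sqrt ‖c‖ : ℂ) * c ^ (1/2 : ℂ)

/-- the other branch -/
def g2 (c : ℂ) : ℂ := Complex.I * ((Real.sqrt ‖c‖ : ℂ) * (-c) ^ (1/2 : ℂ))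

lemma cpow_half_sq (c : ℂ) : (c ^ (1/2 : ℂ)) ^ 2 = c := by
  by_cases hc : c = 0
  · simp [hc, Complex.zero_cpow (by norm_num : (1/2 : ℂ) ≠ 0)]
  · rw [sq, ← Complex.cpow_add _ _ hc]
    norm_num

lemma abs_half (c : ℂ) : ‖(Real.sqrt ‖c‖ : ℂ) * c ^ (1/2 : ℂ)‖
    = ‖c‖ := by
  rw [norm_mul, Complex.norm_of_nonneg (Real.sqrt_nonneg _)]
  have h2 : (1/2 : ℂ) = ((1/2 : ℝ) : ℂ) := by norm_num
  rw [h2, Complex.norm_cpow_real, ← Real.sqrt_eq_rpow,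
    Real.mul_self_sqrt (norm_nonneg _)]

lemma g1_sq (c : ℂ) : g1 c ^ 2 = (‖c‖ : ℂ) * c := by
  rw [g1, mul_pow, cpow_half_sq, ← Complex.ofReal_pow,
    Real.sq_sqrt (norm_nonneg _)]

lemma g1_abs (c : ℂ) : ‖g1 c‖ = ‖c‖ := abs_half c

lemma g2_sq (c : ℂ) : g2 c ^ 2 = (‖c‖ : ℂ) * c := by
  rw [g2, mul_pow, mul_pow, cpow_half_sq, Complex.I_sq, ← Complex.ofReal_pow,
    Real.sq_sqrt (norm_nonneg _)]
  ring

lemma g2_abs (c : ℂ) : ‖g2 c‖ = ‖c‖ := by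
  rw [g2, norm_mul, Complex.norm_I, one_mul]
  simpa [norm_neg] using abs_half (-c)

lemma absMul_inj {a b : ℂ} (h : (‖a‖ : ℂ) * a = (‖b‖ : ℂ) * b) :
    a = b := by
  have habs : ‖a‖ = ‖b‖ := by
    have := congrArg norm h
    rw [norm_mul, norm_mul, Complex.norm_of_nonneg (norm_nonneg _),
      Complex.norm_of_nonneg (norm_nonneg _)] at this
    nlinarith [norm_nonneg a, norm_nonneg b]
  by_cases ha : a = 0
  · have : ‖b‖ = 0 := by rw [← habs, ha, norm_zero]
    rw [ha, (norm_eq_zero.mp this)]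
  · rw [habs] at h
    have hb0 : ‖b‖ ≠ 0 := by
      rw [← habs]; exact norm_ne_zero_iff.mpr ha
    exact mul_left_cancel₀ (by exact_mod_cast hb0) h

end SphAux

namespace SphAux

/-- explicit description of the equivalence relation -/
def R (a b : TwoSphere) : Prop :=
  a = b ∨ (a.1.2 ≠ 0 ∧ b.1.1 = -a.1.1 ∧ b.1.2 = a.1.2)

lemma eqvGen_imp_R {a b : TwoSphere} (h : Relation.EqvGen sphRel a b) : R a b := by
  induction h with
  | rel x y hxy => exact Or.inr hxy
  | refl x => exact Or.inl rfl
  | symm x y _ ih =>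
    rcases ih with h | ⟨hz, hc, hzz⟩
    · exact Or.inl h.symm
    · exact Or.inr ⟨hzz ▸ hz, by rw [hc, neg_neg], hzz.symm⟩
  | trans x y z _ _ ih1 ih2 =>
    rcases ih1 with h1 | ⟨hz1, hc1, hzz1⟩
    · rcases ih2 with h2 | h2
      · exact Or.inl (h1.trans h2)
      · exact Or.inr (h1 ▸ h2)
    · rcases ih2 with h2 | ⟨hz2, hc2, hzz2⟩
      · exact Or.inr ⟨hz1, h2 ▸ hc1, h2 ▸ hzz1⟩
      · refine Or.inl (Subtype.ext (Prod.ext ?_ ?_)).symm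
        · rw [hc2, hc1, neg_neg]
        · rw [hzz2, hzz1]

lemma R_imp_eqvGen {a b : TwoSphere} (h : R a b) : Relation.EqvGen sphRel a b := by
  rcases h with h | h
  · exact h ▸ Relation.EqvGen.refl a
  · exact Relation.EqvGen.rel _ _ h

lemma q_eq_iff {a b : TwoSphere} : sphQ a = sphQ b ↔ R a b := by
  constructor
  · intro h
    exact eqvGen_imp_R
      (((Relation.EqvGen.is_equivalence sphRel).eqvGen_iff).mp (Quot.eqvGen_exact h))
  · intro h
    exact Quot.sound (R_imp_eqvGen h)

/-- abs of the squaring normalization -/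
lemma abs_sqdiv (c : ℂ) : ‖c ^ 2 / (‖c‖ : ℂ)‖ = ‖c‖ := by
  by_cases hc : c = 0
  · simp [hc]
  · rw [norm_div, norm_pow, Complex.norm_of_nonneg (norm_nonneg _),
      sq, mul_div_assoc, div_self (norm_ne_zero_iff.mpr hc), mul_one]

/-- the continuous "squaring" map σ on the sphere -/
def sphSigma (p : TwoSphere) : TwoSphere :=
  ⟨(p.1.1 ^ 2 / (‖p.1.1‖ : ℂ), p.1.2), by
    have := p.2
    simp only [TwoSphere, Set.mem_setOf_eq] at this ⊢
    rw [abs_sqdiv]; exact this⟩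

lemma sigma_g1 (c : ℂ) : (g1 c) ^ 2 / (‖g1 c‖ : ℂ) = c := by
  by_cases hc : c = 0
  · simp [hc, g1]
  · have h : (‖c‖ : ℂ) ≠ 0 := by
      exact_mod_cast norm_ne_zero_iff.mpr hc
    rw [g1_sq, g1_abs, mul_div_cancel_left₀ _ h]

lemma sigma_alpha (v : sphV) : sphSigma (sphAlpha v) = v.1 := by
  apply Subtype.ext
  apply Prod.ext
  · exact sigma_g1 v.1.1.1
  · rfl

end SphAux

namespace SphAux

open Filter Topology

lemma tendsto_zero_of_abs {f : ℂ → ℂ} (h : ∀ c, ‖f c‖ = ‖c‖)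
    (h0 : f 0 = 0) : ContinuousAt f 0 := by
  rw [ContinuousAt, h0]
  rw [tendsto_zero_iff_norm_tendsto_zero]
  simp only [h]
  have := continuous_norm.tendsto (0 : ℂ)
  simpa using this

lemma continuous_sqdiv : Continuous fun c : ℂ => c ^ 2 / (‖c‖ : ℂ) := by
  rw [continuous_iff_continuousAt]
  intro c
  by_cases hc : c = 0
  · subst hc
    exact tendsto_zero_of_abs abs_sqdiv (by simp)
  · exact (continuousAt_id.pow 2).div
      ((Complex.continuous_ofReal.comp continuous_norm).continuousAt)
      (by exact_mod_cast norm_ne_zero_iff.mpr hc)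

lemma continuous_sphSigma : Continuous sphSigma := by
  apply Continuous.subtype_mk
  exact (continuous_sqdiv.comp (continuous_fst.comp continuous_subtype_val)).prodMk
    (continuous_snd.comp continuous_subtype_val)

lemma contAt_sqrtAbs (c : ℂ) :
    ContinuousAt (fun c : ℂ => ((Real.sqrt ‖c‖ : ℝ) : ℂ)) c :=
  (Complex.continuous_ofReal.comp
    (Real.continuous_sqrt.comp continuous_norm)).continuousAt

lemma contAt_g1_slit {c : ℂ} (hc : c ∈ Complex.slitPlane) : ContinuousAt g1 c :=
  (contAt_sqrtAbs c).mul (continuousAt_cpow_const hc)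

lemma contAt_g1_zero : ContinuousAt g1 0 :=
  tendsto_zero_of_abs g1_abs (by simp [g1])

lemma contAt_g2 {c : ℂ} (hc : -c ∈ Complex.slitPlane) : ContinuousAt g2 c := by
  apply ContinuousAt.mul continuousAt_const
  apply (contAt_sqrtAbs c).mul
  exact (continuousAt_cpow_const hc).comp continuous_neg.continuousAt

/-- the second branch of the half-angle map -/
def sphBeta (v : sphV) : TwoSphere :=
  ⟨(g2 v.1.1.1, v.1.1.2), by
    have := v.1.2
    simp only [TwoSphere, Set.mem_setOf_eq] at this ⊢
    rw [g2_abs]; exact this⟩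

lemma q_alpha_eq_q_beta (v : sphV) : sphQ (sphAlpha v) = sphQ (sphBeta v) := by
  have hsq : g1 v.1.1.1 ^ 2 = g2 v.1.1.1 ^ 2 := by rw [g1_sq, g2_sq]
  rcases sq_eq_sq_iff_eq_or_eq_neg.mp hsq with h | h
  · congr 1
    exact Subtype.ext (Prod.ext h rfl)
  · refine q_eq_iff.mpr (Or.inr ⟨v.2, ?_, rfl⟩)
    show g2 v.1.1.1 = -g1 v.1.1.1
    rw [h, neg_neg]

end SphAux

namespace SphAux

open Filter Topology

lemma contAt_q_comp {F : sphV → TwoSphere} {g : ℂ → ℂ}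
    (hF : ∀ w : sphV, (F w).1 = (g w.1.1.1, w.1.1.2)) {v : sphV}
    (hg : ContinuousAt g v.1.1.1) :
    ContinuousAt (fun w : sphV => sphQ (F w)) v := by
  apply (continuous_quot_mk).continuousAt.comp
  rw [Topology.IsInducing.subtypeVal.continuousAt_iff]
  have : (Subtype.val ∘ F) = fun w : sphV => (g w.1.1.1, w.1.1.2) := by
    funext w; exact hF w
  rw [this]
  have hcoord : ContinuousAt (fun w : sphV => w.1.1.1) v :=
    (continuous_fst.comp (continuous_subtype_val.comp continuous_subtype_val)).continuousAt
  exact ContinuousAt.prodMk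
    (ContinuousAt.comp (f := fun w : sphV => w.1.1.1) hg hcoord)
    ((continuous_snd.comp (continuous_subtype_val.comp continuous_subtype_val))).continuousAt

lemma cont_qalpha : Continuous (fun v : sphV => sphQ (sphAlpha v)) := by
  rw [continuous_iff_continuousAt]
  intro v
  by_cases h0 : v.1.1.1 = 0
  · exact contAt_q_comp (fun w => rfl) (h0 ▸ contAt_g1_zero)
  · by_cases hsl : v.1.1.1 ∈ Complex.slitPlane
    · exact contAt_q_comp (fun w => rfl) (contAt_g1_slit hsl)
    · have hfun : (fun v : sphV => sphQ (sphAlpha v)) = fun v => sphQ (sphBeta v) :=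
        funext q_alpha_eq_q_beta
      rw [hfun]
      apply contAt_q_comp (fun w => rfl)
      apply contAt_g2
      rw [Complex.mem_slitPlane_iff] at hsl ⊢
      push_neg at hsl
      left
      simp only [Complex.neg_re, neg_pos]
      rcases lt_or_eq_of_le hsl.1 with h | h
      · exact h
      · exact absurd (Complex.ext (by rw [h, Complex.zero_re]) (by rw [hsl.2, Complex.zero_im])) h0

end SphAux

namespace SphAux

lemma inj_qalpha : Function.Injective (fun v : sphV => sphQ (sphAlpha v)) := by
  intro v w h
  have hR := q_eq_iff.mp h
  have hkey : g1 w.1.1.1 ^ 2 = g1 v.1.1.1 ^ 2 ∧ w.1.1.2 = v.1.1.2 := by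
    rcases hR with he | ⟨_, hc, hzz⟩
    · have h1 : (sphAlpha v).1 = (sphAlpha w).1 := congrArg Subtype.val he
      have h1a' := congrArg Prod.fst h1
      have h1b' := congrArg Prod.snd h1
      have h1a : g1 v.1.1.1 = g1 w.1.1.1 := h1a'
      have h1b : v.1.1.2 = w.1.1.2 := h1b'
      exact ⟨by rw [h1a], h1b.symm⟩
    · exact ⟨by rw [show (g1 w.1.1.1) = -(g1 v.1.1.1) from hc, neg_sq], hzz⟩
  have hcc : w.1.1.1 = v.1.1.1 := absMul_inj (by rw [← g1_sq, ← g1_sq, hkey.1])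
  exact Subtype.ext (Subtype.ext (Prod.ext hcc.symm hkey.2.symm))

lemma sigma_mem (p : TwoSphere) (hp : p ∈ sphV) : sphSigma p ∈ sphV := hp

lemma q_alpha_sigma (p : TwoSphere) (hp : p ∈ sphV) :
    sphQ (sphAlpha ⟨sphSigma p, sigma_mem p hp⟩) = sphQ p := by
  by_cases h0 : p.1.1 = 0
  · apply congrArg
    apply Subtype.ext; apply Prod.ext
    · show g1 ((sphSigma p).1.1) = p.1.1
      have hs : (sphSigma p).1.1 = 0 := by
        show p.1.1 ^ 2 / _ = 0
        rw [h0]; simp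
      rw [hs, h0]
      simp [g1]
    · rfl
  · have hne : (‖p.1.1‖ : ℂ) ≠ 0 := by
      exact_mod_cast norm_ne_zero_iff.mpr h0
    have hsq : g1 ((sphSigma p).1.1) ^ 2 = p.1.1 ^ 2 := by
      rw [g1_sq]
      show (‖(sphSigma p).1.1‖ : ℂ) * (p.1.1 ^ 2 / (‖p.1.1‖ : ℂ))
        = p.1.1 ^ 2
      rw [show ‖(sphSigma p).1.1‖ = ‖p.1.1‖ from abs_sqdiv _]
      field_simp
    apply q_eq_iff.mpr
    rcases sq_eq_sq_iff_eq_or_eq_neg.mp hsq with h | h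
    · exact Or.inl (Subtype.ext (Prod.ext h rfl))
    · exact Or.inr ⟨hp, by show p.1.1 = -(g1 _); rw [h, neg_neg], rfl⟩

lemma range_eq : Set.range (fun v : sphV => sphQ (sphAlpha v))
    = Set.univ \ (sphQ '' sphE) := by
  ext x
  simp only [Set.mem_range, Set.mem_diff, Set.mem_univ, true_and, Set.mem_image,
    not_exists, not_and]
  constructor
  · rintro ⟨v, rfl⟩
    intro e he heq
    rcases q_eq_iff.mp heq with h | ⟨hz, _, _⟩
    · apply v.2
      show (sphAlpha v).1.2 = 0
      rw [← h]
      exact he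
    · exact absurd he hz
  · intro h
    obtain ⟨p, rfl⟩ := Quot.exists_rep x
    have hp : p ∈ sphV := by
      intro hz
      exact h p hz rfl
    exact ⟨⟨sphSigma p, sigma_mem p hp⟩, q_alpha_sigma p hp⟩

lemma isOpen_sphV : IsOpen sphV := by
  have hc : Continuous (fun p : TwoSphere => p.1.2) :=
    continuous_snd.comp continuous_subtype_val
  have : sphV = (fun p : TwoSphere => p.1.2) ⁻¹' ({0}ᶜ) := rfl
  rw [this]
  exact isOpen_compl_singleton.preimage hc

lemma open_qalpha : IsOpenMap (fun v : sphV => sphQ (sphAlpha v)) := by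
  intro U hU
  have heq : sphQ ⁻¹' ((fun v : sphV => sphQ (sphAlpha v)) '' U)
      = sphSigma ⁻¹' (Subtype.val '' U) := by
    ext p
    simp only [Set.mem_preimage, Set.mem_image]
    constructor
    · rintro ⟨u, hu, huq⟩
      refine ⟨u, hu, ?_⟩
      have hps : sphSigma p = sphSigma (sphAlpha u) := by
        rcases q_eq_iff.mp huq with h | ⟨hz, hc, hzz⟩
        · rw [h]
        · apply Subtype.ext; apply Prod.ext
          · show p.1.1 ^ 2 / (‖p.1.1‖ : ℂ) = _
            rw [show p.1.1 = -((sphAlpha u).1.1) from hc, neg_sq, norm_neg]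
            rfl
          · exact hzz
      rw [hps, sigma_alpha]
    · rintro ⟨u, hu, huv⟩
      refine ⟨u, hu, ?_⟩
      have hpz : p ∈ sphV := by
        have h2 := u.2
        rw [huv] at h2
        exact h2
      have hueq : u = ⟨sphSigma p, sigma_mem p hpz⟩ := Subtype.ext huv
      rw [hueq]
      exact q_alpha_sigma p hpz
  apply isQuotientMap_quot_mk.isOpen_preimage.mp
  show IsOpen (sphQ ⁻¹' _)
  rw [heq]
  exact continuous_sphSigma.isOpen_preimage _ (isOpen_sphV.isOpenMap_subtype_val U hU)

end SphAux

/-- the composition `q ∘ α : V → X` is continuous, injective, its range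
is exactly `X ∖ q(E)`, and it is a local homeomorphism. -/
theorem stmt_10 :
    Continuous (fun v : sphV => sphQ (sphAlpha v)) ∧
    Function.Injective (fun v : sphV => sphQ (sphAlpha v)) ∧
    Set.range (fun v : sphV => sphQ (sphAlpha v)) = Set.univ \ (sphQ '' sphE) ∧
    IsLocalHomeomorph (fun v : sphV => sphQ (sphAlpha v)) := by
  refine ⟨SphAux.cont_qalpha, SphAux.inj_qalpha, SphAux.range_eq, ?_⟩
  exact (Topology.IsOpenEmbedding.of_continuous_injective_isOpenMap SphAux.cont_qalpha
    SphAux.inj_qalpha SphAux.open_qalpha).isLocalHomeomorph
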